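/- Let n ≥ 2 and m, k be integers with gcd(n, m, k) = 1; set A = k and B = k − m. If (α.0) holds together with (β+.1) or (β−.1), or if (α.1) holds together with (β+.0) or (β−.0), then n = 18. -/

import Mathlib

/-- `c ≡ n/2 (mod n)`: `2` divides `n` and `c ≡ n/2 (mod n)`. -/
def halfMod (n c : ℤ) : Prop := 2 ∣ n ∧ n ∣ (c - n / 2)

/-- `c ≡ ±n/p (mod n)`: `p` divides `n`, and `c ≡ n/p` or `c ≡ -n/p (mod n)`. -/
def pmMod (n p c : ℤ) : Prop := p ∣ n ∧ (n ∣ (c - n / p) ∨ n ∣ (c + n / p))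

/-- `c ≡ ±2n/5 (mod n)`: `5` divides `n`, and `c ≡ 2n/5` or `c ≡ -2n/5 (mod n)`. -/
def pm2n5Mod (n c : ℤ) : Prop := 5 ∣ n ∧ (n ∣ (c - 2 * (n / 5)) ∨ n ∣ (c + 2 * (n / 5)))

/-- Condition (ρ) for a parameter `c` (i.e. (ρ.0) when `c = B`, (ρ.1) when `c = A`):
`c ≡ n/2` or `c ≡ ±n/3` or `c ≡ ±n/4` or `c ≡ ±n/5` or `c ≡ ±2n/5 (mod n)`. -/
def condRho (n c : ℤ) : Prop :=
  halfMod n c ∨ pmMod n 3 c ∨ pmMod n 4 c ∨ pmMod n 5 c ∨ pm2n5Mod n c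

private lemma helper17 (n : ℤ) (hn : 0 < n) (A B : ℤ) (h6 : 6 ∣ n)
    (hB : n ∣ B - n / 6 ∨ n ∣ B + n / 6)
    (hβ : n ∣ B + 3 * A ∨ n ∣ B - 3 * A)
    (hgcd : ∀ d : ℤ, d ∣ n → d ∣ A → d ∣ B → d ∣ 1) : n = 18 := by
  set t : ℤ := n / 6 with ht
  have hnt : n = 6 * t := (Int.mul_ediv_cancel' h6).symm
  have hδ : ∃ δ : ℤ, (δ = 1 ∨ δ = -1) ∧ n ∣ 3 * A + δ * t := by
    rcases hB with hB | hB <;> rcases hβ with hβ | hβ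
    · exact ⟨1, Or.inl rfl, by have := dvd_sub hβ hB; convert this using 1; rfl; ring⟩
    · exact ⟨-1, Or.inr rfl, by have := dvd_sub hB hβ; convert this using 1; rfl; ring⟩
    · exact ⟨-1, Or.inr rfl, by have := dvd_sub hβ hB; convert this using 1; rfl; ring⟩
    · exact ⟨1, Or.inl rfl, by have := dvd_sub hB hβ; convert this using 1; rfl; ring⟩
  obtain ⟨δ, hδ1, hδd⟩ := hδ
  obtain ⟨s, hs⟩ := hδd
  rw [hnt] at hs
  have h3A : 3 * A = t * (6 * s - δ) := by linarith [hs]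
  have h3t : (3 : ℤ) ∣ t := by
    have h3 : (3 : ℤ) ∣ t * (6 * s - δ) := ⟨A, by linarith⟩
    rcases (Int.prime_three.dvd_mul.mp h3) with h | h
    · exact h
    · exfalso; obtain ⟨c, hc⟩ := h; rcases hδ1 with rfl | rfl <;> omega
  obtain ⟨u, hu⟩ := h3t
  have hA : A = u * (6 * s - δ) := by
    have h := h3A
    rw [hu] at h
    have : 3 * A = 3 * (u * (6 * s - δ)) := by linarith
    exact mul_left_cancel₀ (by norm_num) this
  have hun : u ∣ n := ⟨18, by rw [hnt, hu]; ring⟩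
  have hut : u ∣ t := ⟨3, by omega⟩
  have huB : u ∣ B := by
    rcases hB with hB | hB
    · have h1 : u ∣ B - t := dvd_trans hun hB
      have h2 : u ∣ (B - t) + t := dvd_add h1 hut
      simpa using h2
    · have h1 : u ∣ B + t := dvd_trans hun hB
      have h2 : u ∣ (B + t) - t := dvd_sub h1 hut
      simpa using h2
  have hu1 : u ∣ 1 := hgcd u hun ⟨6 * s - δ, hA⟩ huB
  have : u = 1 ∨ u = -1 := Int.isUnit_iff.mp (isUnit_of_dvd_one hu1)
  rcases this with rfl | rfl
  · omega
  · omega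

theorem stmt17 (n : ℕ) (hn : 2 ≤ n) (m k : ℤ)
    (hgcd : Int.gcd (n : ℤ) ((Int.gcd m k : ℤ)) = 1)
    -- (α.0) with ((β+.1) or (β−.1)), or (α.1) with ((β+.0) or (β−.0))
    (h : (pmMod n 6 (k - m) ∧
            ((n : ℤ) ∣ ((k - m) + 3 * k) ∨ (n : ℤ) ∣ ((k - m) - 3 * k))) ∨
         (pmMod n 6 k ∧
            ((n : ℤ) ∣ (k + 3 * (k - m)) ∨ (n : ℤ) ∣ (k - 3 * (k - m))))) :
    n = 18 := by
  have hn0 : (0 : ℤ) < (n : ℤ) := by exact_mod_cast Nat.lt_of_lt_of_le (by norm_num) hn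
  rcases h with ⟨⟨h6, hB⟩, hβ⟩ | ⟨⟨h6, hA⟩, hβ⟩
  · have key := helper17 (n : ℤ) hn0 k (k - m) h6 hB hβ ?_
    · exact_mod_cast key
    · intro d hdn hdA hdB
      have hdm : d ∣ m := by
        obtain ⟨a, ha⟩ := hdA; obtain ⟨b, hb⟩ := hdB
        exact ⟨a - b, by linarith⟩
      have hd : d ∣ ((Int.gcd (n : ℤ) ((Int.gcd m k : ℤ)) : ℤ)) :=
        Int.dvd_coe_gcd hdn (Int.dvd_coe_gcd hdm hdA)
      rw [hgcd] at hd
      exact_mod_cast hd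
  · have key := helper17 (n : ℤ) hn0 (k - m) k h6 hA hβ ?_
    · exact_mod_cast key
    · intro d hdn hdA hdB
      have hdm : d ∣ m := by
        obtain ⟨a, ha⟩ := hdA; obtain ⟨b, hb⟩ := hdB
        exact ⟨b - a, by linarith⟩
      have hd : d ∣ ((Int.gcd (n : ℤ) ((Int.gcd m k : ℤ)) : ℤ)) :=
        Int.dvd_coe_gcd hdn (Int.dvd_coe_gcd hdm hdB)
      rw [hgcd] at hd
      exact_mod_cast hd
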